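/- Let G = (V,E) be a finite simple graph and s : V → Bool. Then the configuration s is stable (no vertex satisfies the Candidacy guard or the Withdrawal guard) if and only if β(s) is a maximal independent set of G. -/
import Mathlib


def beta {V : Type*} (G : SimpleGraph V) (s : V → Bool) : Set V :=
  {u | s u = true ∧ ∀ v, G.Adj u v → s v = false}

theorem stmt_8 {V : Type*} [Fintype V] (G : SimpleGraph V) (s : V → Bool) :
    (∀ u : V,
      ¬ (s u = false ∧ ∀ v, G.Adj u v → s v = false) ∧
      ¬ (s u = true ∧ ∃ v, G.Adj u v ∧ s v = true)) ↔
    ((∀ u ∈ beta G s, ∀ v ∈ beta G s, ¬ G.Adj u v) ∧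
     (∀ w : V, w ∉ beta G s → ∃ v ∈ beta G s, G.Adj w v)) := by
  constructor
  · intro h
    constructor
    · rintro u ⟨hu, hun⟩ v ⟨hv, _⟩ hadj
      simpa [hv] using hun v hadj
    · intro w hw
      by_cases hsw : s w = true
      · exfalso
        apply (h w).2
        refine ⟨hsw, ?_⟩
        by_contra hno
        push_neg at hno
        exact hw ⟨hsw, fun v hv => by
          have := hno v hv
          cases hsv : s v
          · rfl
          · exact absurd hsv this⟩
      · have hsw' : s w = false := by
          cases hsv : s w
          · rfl
          · exact absurd hsv hsw
        have h1 := (h w).1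
        have : ¬ ∀ v, G.Adj w v → s v = false := fun hall => h1 ⟨hsw', hall⟩
        push_neg at this
        obtain ⟨v, hadj, hv⟩ := this
        have hsv : s v = true := by
          cases hsv : s v
          · exact absurd hsv hv
          · rfl
        refine ⟨v, ⟨hsv, fun z hz => ?_⟩, hadj⟩
        by_contra hz'
        have hsz : s z = true := by
          cases hsz : s z
          · exact absurd hsz hz'
          · rfl
        exact (h v).2 ⟨hsv, z, hz, hsz⟩
  · rintro ⟨hind, hmax⟩ u
    constructor
    · rintro ⟨hu, hall⟩
      have hu' : u ∉ beta G s := fun ⟨h1, _⟩ => by simp [hu] at h1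
      obtain ⟨v, ⟨hv, _⟩, hadj⟩ := hmax u hu'
      simpa [hv] using hall v hadj
    · rintro ⟨hu, v, hadj, hv⟩
      by_cases hvb : v ∈ beta G s
      · have := hvb.2 u hadj.symm
        simp [hu] at this
      · obtain ⟨z, ⟨hz, hzall⟩, hadj'⟩ := hmax v hvb
        have := hzall v hadj'.symm
        simp [hv] at this
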